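/- Let ρ ∈ [1,2). Then there exists a constant C > 0 such that for all t ∈ (0,∞): ( ∫_0^{e^t − 1} |K1(x,t)|^ρ dx )^{1/ρ} ≤ C (1 + t) (e^t − 1)^{1/ρ − 1} (1 − e^{−t}). -/

import Mathlib

open MeasureTheory Real intervalIntegral

/-- Rising factorial (Pochhammer symbol) `(q)_n = q (q+1) ⋯ (q+n−1)`. -/
noncomputable def risingFactorial (q : ℝ) : ℕ → ℝ
  | 0 => 1
  | n + 1 => risingFactorial q n * (q + (n : ℝ))

/-- The Gauss hypergeometric function `F(a,b;c;x)` defined by its power series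
`∑ ((a)_n (b)_n / ((c)_n n!)) x^n`. -/
noncomputable def hyperF (a b c x : ℝ) : ℝ :=
  ∑' n : ℕ, (risingFactorial a n * risingFactorial b n) /
    (risingFactorial c n * (Nat.factorial n : ℝ)) * x ^ n

/-- The kernel `K1(z,t) = ((1+e^t)²−z²)^{−1/2} F(1/2,1/2;1;((e^t−1)²−z²)/((e^t+1)²−z²))`. -/
noncomputable def K1 (z t : ℝ) : ℝ :=
  ((1 + Real.exp t) ^ 2 - z ^ 2) ^ (-(1 : ℝ) / 2) *
    hyperF (1 / 2) (1 / 2) 1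
      (((Real.exp t - 1) ^ 2 - z ^ 2) / ((Real.exp t + 1) ^ 2 - z ^ 2))

/-- The kernel `K0(z,t)`. -/
noncomputable def K0 (z t : ℝ) : ℝ :=
  -(1 / (2 * ((Real.exp t - 1) ^ 2 - z ^ 2) * Real.sqrt ((Real.exp t + 1) ^ 2 - z ^ 2))) *
    ((1 - Real.exp (2 * t) + z ^ 2) *
        hyperF (-(1 / 2)) (1 / 2) 1
          (((Real.exp t - 1) ^ 2 - z ^ 2) / ((Real.exp t + 1) ^ 2 - z ^ 2))
      + 2 * (Real.exp t - 1) *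
        hyperF (1 / 2) (1 / 2) 1
          (((Real.exp t - 1) ^ 2 - z ^ 2) / ((Real.exp t + 1) ^ 2 - z ^ 2)))



lemma rf_one (n : ℕ) : risingFactorial 1 n = (Nat.factorial n : ℝ) := by
  induction n with
  | zero => simp [risingFactorial]
  | succ n ih => simp [risingFactorial, ih, Nat.factorial]; push_cast; ring

lemma rf_half_nonneg (n : ℕ) : 0 ≤ risingFactorial (1/2) n := by
  induction n with
  | zero => norm_num [risingFactorial]
  | succ n ih => simp only [risingFactorial]; positivity

lemma rf_half_sq (n : ℕ) :
    risingFactorial (1/2) n ^ 2 * ((n : ℝ) + 1) ≤ (Nat.factorial n : ℝ) ^ 2 := by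
  induction n with
  | zero => norm_num [risingFactorial]
  | succ n ih =>
    have h1 := rf_half_nonneg n
    have h2 : (0:ℝ) ≤ (n:ℝ) + 1 := by positivity
    simp only [risingFactorial, Nat.factorial]
    push_cast
    nlinarith [sq_nonneg (risingFactorial (1/2) n), sq_nonneg ((n:ℝ)+1),
      mul_nonneg (sq_nonneg (risingFactorial (1/2) n)) h2]




/-- the coefficient of the series -/
noncomputable def cf (n : ℕ) : ℝ :=
  (risingFactorial (1/2) n * risingFactorial (1/2) n) /
    (risingFactorial 1 n * (Nat.factorial n : ℝ))

lemma cf_nonneg (n : ℕ) : 0 ≤ cf n := by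
  have := rf_half_nonneg n
  have : (0:ℝ) ≤ risingFactorial 1 n := by rw [rf_one]; positivity
  unfold cf
  have := rf_half_nonneg n
  positivity

lemma cf_le (n : ℕ) : cf n ≤ 1 / ((n : ℝ) + 1) := by
  have hfac : (0:ℝ) < (Nat.factorial n : ℝ) := by positivity
  have h := rf_half_sq n
  have hn : (0:ℝ) < (n:ℝ) + 1 := by positivity
  rw [cf, rf_one, div_le_div_iff₀ (by positivity) hn]
  nlinarith [rf_half_nonneg n]

lemma cf_zero : cf 0 = 1 := by norm_num [cf, risingFactorial]

/-- comparison series -/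
noncomputable def dser (m : ℝ) (n : ℕ) : ℝ := if n = 0 then 1 else m ^ n / n

lemma dser_hasSum {m : ℝ} (h0 : 0 ≤ m) (h1 : m < 1) :
    HasSum (dser m) (1 - Real.log (1 - m)) := by
  have habs : |m| < 1 := by rw [abs_of_nonneg h0]; exact h1
  have h := hasSum_pow_div_log_of_abs_lt_one habs
  have h2 : HasSum (fun n : ℕ => dser m (n + 1)) (-Real.log (1 - m)) := by
    convert h using 2 with n
    simp [dser]
  have h3 : HasSum (fun n : ℕ => dser m (n + 1))
      ((1 - Real.log (1 - m)) - ∑ i ∈ Finset.range 1, dser m i) := by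
    simpa [dser] using h2
  exact (hasSum_nat_add_iff' 1).mp h3

lemma cf_term_le_dser {m : ℝ} (h0 : 0 ≤ m) (n : ℕ) : cf n * m ^ n ≤ dser m n := by
  rcases Nat.eq_zero_or_pos n with rfl | hn
  · simp [cf_zero, dser]
  · have h1 : cf n * m ^ n ≤ (1 / ((n:ℝ)+1)) * m ^ n :=
      mul_le_mul_of_nonneg_right (cf_le n) (by positivity)
    have h2 : (1 / ((n:ℝ)+1)) * m ^ n ≤ m ^ n / n := by
      rw [div_mul_eq_mul_div, one_mul]
      have hnr : (0:ℝ) < n := by exact_mod_cast hn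
      exact div_le_div_of_nonneg_left (by positivity) hnr (by linarith)
    simp only [dser, Nat.pos_iff_ne_zero.mp hn, if_false]
    linarith

lemma summable_cf {m : ℝ} (h0 : 0 ≤ m) (h1 : m < 1) :
    Summable (fun n => cf n * m ^ n) :=
  Summable.of_nonneg_of_le (fun n => mul_nonneg (cf_nonneg n) (by positivity))
    (cf_term_le_dser h0) (dser_hasSum h0 h1).summable

lemma hyperF_eq (m : ℝ) : hyperF (1/2) (1/2) 1 m = ∑' n, cf n * m ^ n := rfl

lemma hyperF_nonneg {m : ℝ} (h0 : 0 ≤ m) : 0 ≤ hyperF (1/2) (1/2) 1 m := by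
  rw [hyperF_eq]
  exact tsum_nonneg fun n => mul_nonneg (cf_nonneg n) (by positivity)

lemma hyperF_le {m : ℝ} (h0 : 0 ≤ m) (h1 : m < 1) :
    hyperF (1/2) (1/2) 1 m ≤ 1 - Real.log (1 - m) := by
  rw [hyperF_eq]
  have := Summable.tsum_le_tsum (cf_term_le_dser h0) (summable_cf h0 h1) (dser_hasSum h0 h1).summable
  rwa [(dser_hasSum h0 h1).tsum_eq] at this


lemma K1_abs_le {t x : ℝ} (ht : 0 < t) (hx : x ∈ Set.Icc 0 (Real.exp t - 1)) :
    |K1 x t| ≤ (1 + t) * ((1 + Real.exp t) ^ 2 - x ^ 2) ^ (-(1 : ℝ) / 2) := by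
  obtain ⟨hx0, hxa⟩ := hx
  set E := Real.exp t with hE
  have hE1 : 1 < E := by rw [hE, ← Real.exp_zero]; exact Real.exp_lt_exp.mpr ht
  have hD : 0 < (E + 1) ^ 2 - x ^ 2 := by nlinarith
  have hN : 0 ≤ (E - 1) ^ 2 - x ^ 2 := by nlinarith
  set m := ((E - 1) ^ 2 - x ^ 2) / ((E + 1) ^ 2 - x ^ 2) with hm
  have hm0 : 0 ≤ m := div_nonneg hN hD.le
  have hm1 : m < 1 := by
    rw [hm, div_lt_one hD]; nlinarith
  have h1m : 1 - m = 4 * E / ((E + 1) ^ 2 - x ^ 2) := by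
    rw [hm]; field_simp; ring
  have hlog : Real.log (1 - m) ≥ -t := by
    rw [h1m]
    have hpos : (0:ℝ) < 4 * E / ((E + 1) ^ 2 - x ^ 2) := by positivity
    rw [ge_iff_le, Real.le_log_iff_exp_le hpos, Real.exp_neg, inv_eq_one_div, ← hE,
      div_le_div_iff₀ (by linarith) hD]
    nlinarith
  have hFle : hyperF (1/2) (1/2) 1 m ≤ 1 + t := by
    have := hyperF_le hm0 hm1
    linarith
  have hF0 : 0 ≤ hyperF (1/2) (1/2) 1 m := hyperF_nonneg hm0
  have hP : 0 < ((1 + E) ^ 2 - x ^ 2) ^ (-(1 : ℝ) / 2) := by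
    apply Real.rpow_pos_of_pos; nlinarith
  have : K1 x t = ((1 + E) ^ 2 - x ^ 2) ^ (-(1 : ℝ) / 2) * hyperF (1/2) (1/2) 1 m := rfl
  rw [this, abs_of_nonneg (mul_nonneg hP.le hF0), mul_comm ((1:ℝ) + t) _]
  exact mul_le_mul_of_nonneg_left hFle hP.le

lemma K1_pow_continuousOn {t ρ : ℝ} (ht : 0 < t) (hρ : 0 ≤ ρ) :
    ContinuousOn (fun x => |K1 x t| ^ ρ) (Set.Icc 0 (Real.exp t - 1)) := by
  set E := Real.exp t with hE
  have hE1 : 1 < E := by rw [hE, ← Real.exp_zero]; exact Real.exp_lt_exp.mpr ht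
  set s := Set.Icc (0:ℝ) (E - 1) with hs
  have hD : ∀ x ∈ s, 0 < (E + 1) ^ 2 - x ^ 2 := by
    rintro x ⟨hx0, hx1⟩; nlinarith
  have hcont1 : ContinuousOn (fun x : ℝ => ((1 + E) ^ 2 - x ^ 2) ^ (-(1 : ℝ) / 2)) s := by
    apply ContinuousOn.rpow_const
    · exact (continuousOn_const.sub ((continuousOn_id).pow 2))
    · intro x hx
      left
      have := hD x hx
      nlinarith [this]
  set r : ℝ := (E - 1) ^ 2 / (E + 1) ^ 2 with hr
  have hr0 : 0 ≤ r := by positivity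
  have hr1 : r < 1 := by
    rw [hr, div_lt_one (by positivity)]; nlinarith
  have hmcont : ContinuousOn
      (fun x : ℝ => ((E - 1) ^ 2 - x ^ 2) / ((E + 1) ^ 2 - x ^ 2)) s := by
    apply ContinuousOn.div
    · exact continuousOn_const.sub ((continuousOn_id).pow 2)
    · exact continuousOn_const.sub ((continuousOn_id).pow 2)
    · intro x hx; exact (hD x hx).ne'
  have hmbound : ∀ x ∈ s, |((E - 1) ^ 2 - x ^ 2) / ((E + 1) ^ 2 - x ^ 2)| ≤ r := by
    rintro x ⟨hx0, hx1⟩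
    have hDx : 0 < (E + 1) ^ 2 - x ^ 2 := hD x ⟨hx0, hx1⟩
    have hN : 0 ≤ (E - 1) ^ 2 - x ^ 2 := by nlinarith
    rw [abs_of_nonneg (div_nonneg hN hDx.le), hr, div_le_div_iff₀ hDx (by positivity)]
    nlinarith
  have hcont2 : ContinuousOn (fun x : ℝ =>
      hyperF (1/2) (1/2) 1 (((E - 1) ^ 2 - x ^ 2) / ((E + 1) ^ 2 - x ^ 2))) s := by
    show ContinuousOn (fun x : ℝ =>
      ∑' n, cf n * (((E - 1) ^ 2 - x ^ 2) / ((E + 1) ^ 2 - x ^ 2)) ^ n) s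
    apply continuousOn_tsum (u := fun n => r ^ n)
    · intro n
      exact continuousOn_const.mul (hmcont.pow n)
    · exact summable_geometric_of_lt_one hr0 hr1
    · intro n x hx
      have h1 : |cf n| ≤ 1 := by
        rw [abs_of_nonneg (cf_nonneg n)]
        calc cf n ≤ 1 / ((n:ℝ) + 1) := cf_le n
        _ ≤ 1 := by rw [div_le_one (by positivity)]; linarith [Nat.cast_nonneg (α := ℝ) n]
      calc ‖cf n * (((E - 1) ^ 2 - x ^ 2) / ((E + 1) ^ 2 - x ^ 2)) ^ n‖
          = |cf n| * |((E - 1) ^ 2 - x ^ 2) / ((E + 1) ^ 2 - x ^ 2)| ^ n := by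
            rw [Real.norm_eq_abs, abs_mul, abs_pow]
        _ ≤ 1 * r ^ n := by
            apply mul_le_mul h1 (pow_le_pow_left₀ (abs_nonneg _) (hmbound x hx) n)
              (by positivity) zero_le_one
        _ = r ^ n := one_mul _
  have : ContinuousOn (fun x => K1 x t) s := by
    simp only [K1, ← hE]
    exact hcont1.mul hcont2
  exact (this.abs).rpow_const (fun x _ => Or.inr hρ)


set_option maxHeartbeats 1000000 in
theorem statement15 (ρ : ℝ) (hρ1 : 1 ≤ ρ) (hρ2 : ρ < 2) :
    ∃ C > 0, ∀ t : ℝ, 0 < t →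
      (∫ x in (0 : ℝ)..(Real.exp t - 1), |K1 x t| ^ ρ) ^ (1 / ρ)
        ≤ C * (1 + t) * (Real.exp t - 1) ^ (1 / ρ - 1) * (1 - Real.exp (-t)) := by
  have hρ0 : (0:ℝ) < ρ := lt_of_lt_of_le one_pos hρ1
  set ρ' : ℝ := 1 - ρ/2 with hρ'def
  have hρ'0 : 0 < ρ' := by rw [hρ'def]; linarith
  have hρ'1 : ρ' ≤ 1 := by rw [hρ'def]; linarith
  refine ⟨8 / ρ', by positivity, ?_⟩
  intro t ht
  set C : ℝ := 8 / ρ' with hCdef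
  have hC0 : 0 < C := by positivity
  have hC8 : 8 ≤ C := by
    rw [hCdef, le_div_iff₀ hρ'0]; nlinarith
  have hC1 : 1 ≤ C := by linarith
  set E : ℝ := Real.exp t with hE
  have hE1 : 1 < E := by rw [hE, ← Real.exp_zero]; exact Real.exp_lt_exp.mpr ht
  set a : ℝ := E - 1 with hadef
  have ha0 : 0 < a := by rw [hadef]; linarith
  have hq0 : 0 < 1 - Real.exp (-t) := by
    have : Real.exp (-t) < 1 := by
      rw [← Real.exp_zero]; exact Real.exp_lt_exp.mpr (by linarith)
    linarith
  have h1t : (0:ℝ) < 1 + t := by linarith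
  set R : ℝ := C * (1 + t) * a ^ (1/ρ - 1) * (1 - Real.exp (-t)) with hRdef
  have hR0 : 0 < R := by
    rw [hRdef]
    have := Real.rpow_pos_of_pos ha0 (1/ρ - 1)
    positivity
  -- reduce to the ρ-th power inequality
  suffices h : (∫ x in (0:ℝ)..a, |K1 x t| ^ ρ) ≤ R ^ ρ by
    have hI0 : 0 ≤ ∫ x in (0:ℝ)..a, |K1 x t| ^ ρ :=
      intervalIntegral.integral_nonneg ha0.le
        (fun x _ => Real.rpow_nonneg (abs_nonneg _) ρ)
    calc (∫ x in (0:ℝ)..a, |K1 x t| ^ ρ) ^ (1/ρ)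
        ≤ (R ^ ρ) ^ (1/ρ) := Real.rpow_le_rpow hI0 h (by positivity)
      _ = R := by
          rw [← Real.rpow_mul hR0.le, mul_one_div, div_self hρ0.ne', Real.rpow_one]
  -- integrability of the integrand
  have hK : IntervalIntegrable (fun x => |K1 x t| ^ ρ) volume 0 a := by
    apply ContinuousOn.intervalIntegrable
    rw [Set.uIcc_of_le ha0.le]
    exact K1_pow_continuousOn ht hρ0.le
  have hexp_aux : Real.exp (-t) = E⁻¹ := by rw [hE, ← Real.exp_neg]
  by_cases hT : t ≤ 1
  · -- small time: uniform bound
    set B : ℝ := (1 + t) * (4 * E) ^ (-(1:ℝ)/2) with hBdef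
    have hB0 : 0 ≤ B := by
      have : (0:ℝ) < (4*E) ^ (-(1:ℝ)/2) := Real.rpow_pos_of_pos (by linarith) _
      positivity
    have hb : ∀ x ∈ Set.Icc (0:ℝ) a, |K1 x t| ^ ρ ≤ B ^ ρ := by
      intro x hx
      apply Real.rpow_le_rpow (abs_nonneg _) ?_ hρ0.le
      calc |K1 x t| ≤ (1 + t) * ((1 + E) ^ 2 - x ^ 2) ^ (-(1:ℝ)/2) := K1_abs_le ht hx
        _ ≤ B := by
            rw [hBdef]
            apply mul_le_mul_of_nonneg_left ?_ h1t.le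
            apply Real.rpow_le_rpow_of_nonpos (by linarith) ?_ (by norm_num)
            obtain ⟨hx0, hx1⟩ := hx
            nlinarith
    have hInt : (∫ x in (0:ℝ)..a, |K1 x t| ^ ρ) ≤ a * B ^ ρ := by
      have h := intervalIntegral.integral_mono_on ha0.le hK intervalIntegrable_const hb
      simpa using h
    refine hInt.trans ?_
    -- a * B^ρ = (a^{1/ρ} B)^ρ  and base inequality
    have key : a ^ ((1:ℝ)/ρ) = a ^ (1/ρ - 1) * a := by
      rw [← Real.rpow_add_one ha0.ne' (1/ρ - 1)]; norm_num
    have hscal : a * (4*E) ^ (-(1:ℝ)/2) ≤ C * (1 - Real.exp (-t)) := by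
      have hsq : (4*E) ^ (-(1:ℝ)/2) = (Real.sqrt (4*E))⁻¹ := by
        rw [Real.sqrt_eq_rpow, ← Real.rpow_neg (by linarith)]; norm_num
      have hsqrt : Real.sqrt (4*E) = 2 * Real.sqrt E := by
        rw [show (4:ℝ)*E = 2^2 * E by norm_num, Real.sqrt_mul (by norm_num), Real.sqrt_sq
          (by norm_num)]
      have hq : 1 - Real.exp (-t) = a / E := by
        rw [hexp_aux, hadef]; field_simp
      set s : ℝ := Real.sqrt E with hsdef
      have hs2 : s ^ 2 = E := Real.sq_sqrt (by linarith)
      have hs1 : 1 ≤ s := by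
        rw [hsdef, show (1:ℝ) = Real.sqrt 1 by simp]
        exact Real.sqrt_le_sqrt (by linarith)
      have hE3 : E ≤ 3 := by
        rw [hE]
        calc Real.exp t ≤ Real.exp 1 := Real.exp_le_exp.mpr hT
          _ ≤ 3 := by linarith [Real.exp_one_lt_d9]
      have hs2C : s ≤ 2 * C := by nlinarith
      rw [hsq, hsqrt, hq, ← div_eq_mul_inv, ← mul_div_assoc,
        div_le_div_iff₀ (by positivity) (by linarith)]
      have hsnn : (0:ℝ) ≤ a * s := mul_nonneg ha0.le (by linarith)
      calc a * E = (a * s) * s := by rw [← hs2]; ring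
        _ ≤ (a * s) * (2 * C) := mul_le_mul_of_nonneg_left hs2C hsnn
        _ = C * a * (2 * s) := by ring
    have haux : a * B ^ ρ = (a ^ ((1:ℝ)/ρ) * B) ^ ρ := by
      rw [Real.mul_rpow (Real.rpow_nonneg ha0.le _) hB0, ← Real.rpow_mul ha0.le,
        one_div_mul_cancel hρ0.ne', Real.rpow_one]
    rw [haux]
    apply Real.rpow_le_rpow (mul_nonneg (Real.rpow_nonneg ha0.le _) hB0) ?_ hρ0.le
    calc a ^ ((1:ℝ)/ρ) * B
        = (a ^ (1/ρ - 1) * (1 + t)) * (a * (4*E) ^ (-(1:ℝ)/2)) := by rw [key, hBdef]; ring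
      _ ≤ (a ^ (1/ρ - 1) * (1 + t)) * (C * (1 - Real.exp (-t))) := by
          apply mul_le_mul_of_nonneg_left hscal
          positivity
      _ = R := by rw [hRdef]; ring
  · -- large time
    push_neg at hT
    have hE2 : 2 < E := by
      rw [hE]
      calc (2:ℝ) < Real.exp 1 := by linarith [Real.exp_one_gt_d9]
        _ ≤ Real.exp t := Real.exp_le_exp.mpr hT.le
    set K : ℝ := ((1 + t) * E ^ (-(1:ℝ)/2)) ^ ρ with hKdef
    have hK0 : 0 ≤ K := by
      have := Real.rpow_pos_of_pos (show (0:ℝ) < E by linarith) (-(1:ℝ)/2)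
      positivity
    -- pointwise bound
    have hb : ∀ x ∈ Set.Icc (0:ℝ) a,
        |K1 x t| ^ ρ ≤ K * ((1 + E) - x) ^ (-(ρ/2)) := by
      intro x hx
      obtain ⟨hx0, hx1⟩ := hx
      have hE0 : (0:ℝ) < E := by linarith
      have hu : 0 < (1 + E) - x := by rw [hadef] at hx1; linarith
      have hEu : 0 < E * ((1 + E) - x) := mul_pos hE0 hu
      have hsq : (0:ℝ) < (1 + E) ^ 2 - x ^ 2 := by nlinarith
      have h1 : E * ((1 + E) - x) ≤ (1 + E) ^ 2 - x ^ 2 := by nlinarith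
      have h2 : ((1 + E) ^ 2 - x ^ 2) ^ (-(1:ℝ)/2) ≤ (E * ((1 + E) - x)) ^ (-(1:ℝ)/2) :=
        Real.rpow_le_rpow_of_nonpos hEu h1 (by norm_num)
      calc |K1 x t| ^ ρ
          ≤ ((1 + t) * ((1 + E) ^ 2 - x ^ 2) ^ (-(1:ℝ)/2)) ^ ρ :=
            Real.rpow_le_rpow (abs_nonneg _) (K1_abs_le ht ⟨hx0, hx1⟩) hρ0.le
        _ ≤ ((1 + t) * (E * ((1 + E) - x)) ^ (-(1:ℝ)/2)) ^ ρ := by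
            have hpos : (0:ℝ) < ((1 + E) ^ 2 - x ^ 2) ^ (-(1:ℝ)/2) :=
              Real.rpow_pos_of_pos hsq _
            have hnn : (0:ℝ) ≤ (1 + t) * ((1 + E) ^ 2 - x ^ 2) ^ (-(1:ℝ)/2) :=
              mul_nonneg h1t.le hpos.le
            exact Real.rpow_le_rpow hnn (mul_le_mul_of_nonneg_left h2 h1t.le) hρ0.le
        _ = K * ((1 + E) - x) ^ (-(ρ/2)) := by
            have hEr : (0:ℝ) ≤ (1 + t) * E ^ (-(1:ℝ)/2) :=
              mul_nonneg h1t.le (Real.rpow_nonneg hE0.le _)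
            rw [Real.mul_rpow hE0.le hu.le, ← mul_assoc, hKdef,
              Real.mul_rpow hEr (Real.rpow_nonneg hu.le _),
              ← Real.rpow_mul hu.le]
            congr 1
            ring
    -- integrability of the majorant
    have hG : IntervalIntegrable (fun x => K * ((1 + E) - x) ^ (-(ρ/2))) volume 0 a := by
      apply ContinuousOn.intervalIntegrable
      rw [Set.uIcc_of_le ha0.le]
      apply ContinuousOn.mul continuousOn_const
      apply ContinuousOn.rpow_const (continuousOn_const.sub continuousOn_id)
      rintro x ⟨hx0, hx1⟩
      left
      rw [hadef] at hx1
      intro hcon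
      simp only [Pi.sub_apply, id_eq] at hcon
      linarith
    have hInt : (∫ x in (0:ℝ)..a, |K1 x t| ^ ρ)
        ≤ K * ∫ x in (0:ℝ)..a, ((1 + E) - x) ^ (-(ρ/2)) := by
      have h := intervalIntegral.integral_mono_on ha0.le hK hG hb
      rwa [intervalIntegral.integral_const_mul] at h
    -- compute the majorant integral
    have hval : (∫ x in (0:ℝ)..a, ((1 + E) - x) ^ (-(ρ/2)))
        = ((1 + E) ^ ρ' - 2 ^ ρ') / ρ' := by
      rw [intervalIntegral.integral_comp_sub_left (fun u => u ^ (-(ρ/2))) (1 + E)]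
      have e1 : 1 + E - a = 2 := by rw [hadef]; ring
      have e2 : 1 + E - 0 = 1 + E := by ring
      rw [e1, e2, integral_rpow (Or.inl (by linarith : (-1:ℝ) < -(ρ/2)))]
      have e3 : -(ρ/2) + 1 = ρ' := by rw [hρ'def]; ring
      rw [e3]
    have hval_le : (∫ x in (0:ℝ)..a, ((1 + E) - x) ^ (-(ρ/2))) ≤ (1 + E) ^ ρ' / ρ' := by
      rw [hval]
      have h2nn : (0:ℝ) ≤ (2:ℝ) ^ ρ' := Real.rpow_nonneg (by norm_num) _
      exact (div_le_div_iff_of_pos_right hρ'0).mpr (by linarith)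
    have hIle : (∫ x in (0:ℝ)..a, |K1 x t| ^ ρ) ≤ K * ((1 + E) ^ ρ' / ρ') :=
      hInt.trans (mul_le_mul_of_nonneg_left hval_le hK0)
    refine hIle.trans ?_
    -- final comparison with R^ρ
    have hRpow : R ^ ρ = C ^ ρ * (1 + t) ^ ρ * a ^ (1 - ρ) * (1 - Real.exp (-t)) ^ ρ := by
      have hex : (1/ρ - 1) * ρ = 1 - ρ := by rw [sub_mul, one_div_mul_cancel hρ0.ne', one_mul]
      rw [hRdef, Real.mul_rpow (by positivity) hq0.le,
        Real.mul_rpow (by positivity) (Real.rpow_nonneg ha0.le _),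
        Real.mul_rpow hC0.le h1t.le, ← Real.rpow_mul ha0.le, hex]
    rw [hRpow]
    have hKexp : K = (1 + t) ^ ρ * E ^ (-(ρ/2)) := by
      rw [hKdef, Real.mul_rpow h1t.le (Real.rpow_nonneg (by linarith) _),
        ← Real.rpow_mul (by linarith : (0:ℝ) ≤ E)]
      congr 1
      ring
    -- key bounds
    have hEpos : (0:ℝ) < E := by linarith
    have h1 : (1 + E) ^ ρ' ≤ 2 * E ^ ρ' := by
      calc (1 + E) ^ ρ' ≤ (2 * E) ^ ρ' :=
            Real.rpow_le_rpow (by linarith) (by linarith) hρ'0.le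
        _ = 2 ^ ρ' * E ^ ρ' := Real.mul_rpow (by norm_num) hEpos.le
        _ ≤ 2 * E ^ ρ' := by
            apply mul_le_mul_of_nonneg_right ?_ (Real.rpow_nonneg hEpos.le _)
            calc (2:ℝ) ^ ρ' ≤ 2 ^ (1:ℝ) := Real.rpow_le_rpow_of_exponent_le one_le_two hρ'1
              _ = 2 := Real.rpow_one 2
    have h2 : E ^ (-(ρ/2)) * E ^ ρ' = E ^ (1 - ρ) := by
      rw [← Real.rpow_add hEpos]
      congr 1
      rw [hρ'def]; ring
    have h3 : E ^ (1 - ρ) ≤ a ^ (1 - ρ) :=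
      Real.rpow_le_rpow_of_nonpos ha0 (by rw [hadef]; linarith) (by linarith)
    have h4 : (1/4 : ℝ) ≤ (1 - Real.exp (-t)) ^ ρ := by
      have he : Real.exp (-t) ≤ 1/2 := by
        rw [hexp_aux]
        rw [inv_eq_one_div, div_le_div_iff₀ hEpos (by norm_num)]
        linarith
      have hhalf : (1/2 : ℝ) ≤ 1 - Real.exp (-t) := by linarith
      calc (1/4 : ℝ) = (1/2 : ℝ) ^ (2:ℝ) := by
            rw [show (2:ℝ) = ((2:ℕ):ℝ) by norm_num, Real.rpow_natCast]; norm_num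
        _ ≤ (1/2 : ℝ) ^ ρ :=
            Real.rpow_le_rpow_of_exponent_ge (by norm_num) (by norm_num) hρ2.le
        _ ≤ (1 - Real.exp (-t)) ^ ρ := Real.rpow_le_rpow (by norm_num) hhalf hρ0.le
    have h5 : C ≤ C ^ ρ := by
      calc C = C ^ (1:ℝ) := (Real.rpow_one C).symm
        _ ≤ C ^ ρ := Real.rpow_le_rpow_of_exponent_le hC1 hρ1
    -- assemble
    have hEneg : (0:ℝ) < E ^ (-(ρ/2)) := Real.rpow_pos_of_pos hEpos _
    have hstep : K * ((1 + E) ^ ρ' / ρ') ≤ (1 + t) ^ ρ * (2 * E ^ (1 - ρ) / ρ') := by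
      rw [hKexp]
      have : E ^ (-(ρ/2)) * ((1 + E) ^ ρ' / ρ') ≤ 2 * E ^ (1 - ρ) / ρ' := by
        calc E ^ (-(ρ/2)) * ((1 + E) ^ ρ' / ρ')
            = (E ^ (-(ρ/2)) * (1 + E) ^ ρ') / ρ' := by ring
          _ ≤ (E ^ (-(ρ/2)) * (2 * E ^ ρ')) / ρ' := by
              exact (div_le_div_iff_of_pos_right hρ'0).mpr (mul_le_mul_of_nonneg_left h1 hEneg.le)
          _ = 2 * E ^ (1 - ρ) / ρ' := by
              rw [show E ^ (-(ρ/2)) * (2 * E ^ ρ') = 2 * (E ^ (-(ρ/2)) * E ^ ρ') by ring, h2]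
      calc (1 + t) ^ ρ * E ^ (-(ρ/2)) * ((1 + E) ^ ρ' / ρ')
          = (1 + t) ^ ρ * (E ^ (-(ρ/2)) * ((1 + E) ^ ρ' / ρ')) := by ring
        _ ≤ (1 + t) ^ ρ * (2 * E ^ (1 - ρ) / ρ') :=
            mul_le_mul_of_nonneg_left this (by positivity)
    refine hstep.trans ?_
    have hfinal : 2 * E ^ (1 - ρ) / ρ' ≤ C ^ ρ * a ^ (1 - ρ) * (1 - Real.exp (-t)) ^ ρ := by
      have hC' : 2 / ρ' = C * (1/4) := by rw [hCdef]; ring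
      calc 2 * E ^ (1 - ρ) / ρ' = (C * (1/4)) * E ^ (1 - ρ) := by
            rw [← hC']; ring
        _ ≤ (C ^ ρ * (1 - Real.exp (-t)) ^ ρ) * a ^ (1 - ρ) := by
            apply mul_le_mul
            · exact mul_le_mul h5 h4 (by norm_num) (by positivity)
            · exact h3
            · positivity
            · positivity
        _ = C ^ ρ * a ^ (1 - ρ) * (1 - Real.exp (-t)) ^ ρ := by ring
    calc (1 + t) ^ ρ * (2 * E ^ (1 - ρ) / ρ')
        ≤ (1 + t) ^ ρ * (C ^ ρ * a ^ (1 - ρ) * (1 - Real.exp (-t)) ^ ρ) :=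
          mul_le_mul_of_nonneg_left hfinal (by positivity)
      _ = C ^ ρ * (1 + t) ^ ρ * a ^ (1 - ρ) * (1 - Real.exp (-t)) ^ ρ := by ring
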